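/- If s(t+1) = s(t) + 2, then every (t+1)-extremal graph is triangle-free, and s(t) = s₂(t) and s(t+1) = s₂(t+1). -/

import Mathlib

open SimpleGraph

/-- Independence number: maximum size of an independent (stable) set. -/
noncomputable def indepNum {V : Type*} [Fintype V] (G : SimpleGraph V) : ℕ :=
  sSup {n | ∃ s : Finset V, (s : Set V).Pairwise (fun a b => ¬ G.Adj a b) ∧ s.card = n}

/-- Clique cover number: minimum number of cliques covering all vertices. -/
noncomputable def cliqueCoverNum {V : Type*} [Fintype V] (G : SimpleGraph V) : ℕ :=
  sInf {n | ∃ P : Finset (Finset V),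
    (∀ c ∈ P, G.IsClique (c : Set V)) ∧ (∀ v : V, ∃ c ∈ P, v ∈ c) ∧ P.card = n}

/-- The (covering) gap of a graph: θ(G) - α(G). -/
noncomputable def gap {V : Type*} [Fintype V] (G : SimpleGraph V) : ℕ :=
  cliqueCoverNum G - _root_.indepNum G

/-- s(t): smallest number of vertices of a graph with gap t. -/
noncomputable def sFun (t : ℕ) : ℕ :=
  sInf {n | ∃ G : SimpleGraph (Fin n), gap G = t}

/-- s₂(t): smallest number of vertices of a triangle-free graph with gap t. -/
noncomputable def s2Fun (t : ℕ) : ℕ :=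
  sInf {n | ∃ G : SimpleGraph (Fin n), G.CliqueFree 3 ∧ gap G = t}

set_option linter.unusedSectionVars false
set_option linter.unusedVariables false

section basicAux
variable {V : Type*} [Fintype V] (G : SimpleGraph V)

private lemma indep_bddAbove :
    BddAbove {n | ∃ s : Finset V, (s : Set V).Pairwise (fun a b => ¬ G.Adj a b) ∧ s.card = n} :=
  ⟨Fintype.card V, fun n ⟨s, _, hc⟩ => hc ▸ Finset.card_le_univ s⟩

private lemma indep_nonempty :
    {n | ∃ s : Finset V, (s : Set V).Pairwise (fun a b => ¬ G.Adj a b) ∧ s.card = n}.Nonempty :=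
  ⟨0, ∅, by simp⟩

private lemma exists_indep : ∃ s : Finset V,
    (s : Set V).Pairwise (fun a b => ¬ G.Adj a b) ∧ s.card = _root_.indepNum G :=
  Nat.sSup_mem (indep_nonempty G) (indep_bddAbove G)

private lemma le_indepNum (s : Finset V) (hs : (s : Set V).Pairwise (fun a b => ¬ G.Adj a b)) :
    s.card ≤ _root_.indepNum G :=
  le_csSup (indep_bddAbove G) ⟨s, hs, rfl⟩

private lemma cover_nonempty :
    {n | ∃ P : Finset (Finset V),
      (∀ c ∈ P, G.IsClique (c : Set V)) ∧ (∀ v : V, ∃ c ∈ P, v ∈ c) ∧ P.card = n}.Nonempty := by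
  classical
  refine ⟨_, Finset.univ.image (fun v => ({v} : Finset V)), ?_, ?_, rfl⟩
  · intro c hc
    obtain ⟨v, -, rfl⟩ := Finset.mem_image.1 hc
    simp [SimpleGraph.IsClique]
  · intro v
    exact ⟨{v}, Finset.mem_image.2 ⟨v, Finset.mem_univ v, rfl⟩, Finset.mem_singleton_self v⟩

private lemma exists_cover : ∃ P : Finset (Finset V),
    (∀ c ∈ P, G.IsClique (c : Set V)) ∧ (∀ v : V, ∃ c ∈ P, v ∈ c) ∧
      P.card = cliqueCoverNum G :=
  Nat.sInf_mem (cover_nonempty G)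

private lemma cliqueCoverNum_le (P : Finset (Finset V))
    (h1 : ∀ c ∈ P, G.IsClique (c : Set V)) (h2 : ∀ v : V, ∃ c ∈ P, v ∈ c) :
    cliqueCoverNum G ≤ P.card :=
  Nat.sInf_le ⟨P, h1, h2, rfl⟩

private lemma gap_eq_zero_of_no_edge (h : ∀ a b : V, ¬ G.Adj a b) : gap G = 0 := by
  classical
  have hα : Fintype.card V ≤ _root_.indepNum G := by
    have := le_indepNum G Finset.univ (fun a _ b _ hab => h a b)
    simpa using this
  have hθ : cliqueCoverNum G ≤ Fintype.card V := by
    calc cliqueCoverNum G ≤ (Finset.univ.image (fun v => ({v} : Finset V))).card := by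
          apply cliqueCoverNum_le
          · intro c hc
            obtain ⟨v, -, rfl⟩ := Finset.mem_image.1 hc
            simp [SimpleGraph.IsClique]
          · intro v
            exact ⟨{v}, Finset.mem_image.2 ⟨v, Finset.mem_univ v, rfl⟩,
              Finset.mem_singleton_self v⟩
      _ ≤ Finset.univ.card := Finset.card_image_le
      _ = Fintype.card V := Finset.card_univ
  unfold gap
  omega

private lemma gap_eq_zero_of_card_zero (h : Fintype.card V = 0) : gap G = 0 := by
  have : IsEmpty V := Fintype.card_eq_zero_iff.1 h
  have hθ : cliqueCoverNum G ≤ (∅ : Finset (Finset V)).card :=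
    cliqueCoverNum_le G ∅ (by simp) (fun v => (this.false v).elim)
  unfold gap
  simp at hθ
  omega

end basicAux

section delAux

/-- Graph obtained by deleting the vertex set `T`. -/
private def del {V : Type*} (G : SimpleGraph V) (T : Finset V) : SimpleGraph {x : V // x ∉ T} :=
  G.comap Subtype.val

variable {V : Type*} [Fintype V] [DecidableEq V] (G : SimpleGraph V) (T : Finset V)

private lemma card_del : Fintype.card {x : V // x ∉ T} = Fintype.card V - T.card := by
  classical
  rw [Fintype.card_subtype_compl]
  congr 1
  simp [Fintype.card_subtype]

private lemma del_cliqueFree {n : ℕ} (h : G.CliqueFree n) : (del G T).CliqueFree n :=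
  h.comap ⟨⟨Subtype.val, fun h => h⟩, Subtype.val_injective⟩

private lemma indepNum_del_le : _root_.indepNum (del G T) ≤ _root_.indepNum G := by
  classical
  obtain ⟨s, hs, hcard⟩ := exists_indep (del G T)
  rw [← hcard]
  have hinj : Function.Injective (Subtype.val : {x : V // x ∉ T} → V) := Subtype.val_injective
  rw [← Finset.card_image_of_injective s hinj]
  apply le_indepNum
  intro a ha b hb hab
  simp only [Finset.coe_image, Set.mem_image, Finset.mem_coe] at ha hb
  obtain ⟨x, hx, rfl⟩ := ha
  obtain ⟨y, hy, rfl⟩ := hb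
  exact hs hx hy (fun e => hab (congrArg _ e))

private lemma cliqueCoverNum_del_le : cliqueCoverNum (del G T) ≤ cliqueCoverNum G := by
  classical
  obtain ⟨P, hcl, hcov, hcard⟩ := exists_cover G
  rw [← hcard]
  calc cliqueCoverNum (del G T)
      ≤ (P.image (fun c => Finset.univ.filter (fun x : {x : V // x ∉ T} => x.val ∈ c))).card := by
        apply cliqueCoverNum_le
        · intro c hc
          obtain ⟨c0, hc0, rfl⟩ := Finset.mem_image.1 hc
          intro a ha b hb hab
          simp only [Finset.coe_filter, Set.mem_setOf_eq] at ha hb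
          exact hcl c0 hc0 ha.2 hb.2 (fun e => hab (Subtype.ext e))
        · intro v
          obtain ⟨c, hc, hvc⟩ := hcov v.val
          exact ⟨_, Finset.mem_image.2 ⟨c, hc, rfl⟩, by simp [hvc]⟩
    _ ≤ P.card := Finset.card_image_le

private lemma indepNum_le_del : _root_.indepNum G ≤ _root_.indepNum (del G T) + T.card := by
  classical
  obtain ⟨s, hs, hcard⟩ := exists_indep G
  rw [← hcard]
  set s' : Finset {x : V // x ∉ T} := Finset.univ.filter (fun x => x.val ∈ s) with hs'
  have h1 : s'.card ≤ _root_.indepNum (del G T) := by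
    apply le_indepNum
    intro a ha b hb hab
    simp only [hs', Finset.coe_filter, Set.mem_setOf_eq] at ha hb
    exact hs ha.2 hb.2 (fun e => hab (Subtype.ext e))
  have h2 : s ⊆ s'.image Subtype.val ∪ T := by
    intro v hv
    by_cases hvT : v ∈ T
    · exact Finset.mem_union_right _ hvT
    · exact Finset.mem_union_left _ (Finset.mem_image.2 ⟨⟨v, hvT⟩, by simp [hs', hv], rfl⟩)
  calc s.card ≤ (s'.image Subtype.val ∪ T).card := Finset.card_le_card h2
    _ ≤ (s'.image Subtype.val).card + T.card := Finset.card_union_le _ _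
    _ ≤ s'.card + T.card := by gcongr; exact Finset.card_image_le
    _ ≤ _root_.indepNum (del G T) + T.card := by gcongr

private lemma cliqueCoverNum_le_del (hT : G.IsClique (T : Set V)) :
    cliqueCoverNum G ≤ cliqueCoverNum (del G T) + 1 := by
  classical
  obtain ⟨P, hcl, hcov, hcard⟩ := exists_cover (del G T)
  rw [← hcard]
  calc cliqueCoverNum G
      ≤ (P.image (fun c => c.image Subtype.val) ∪ {T}).card := by
        apply cliqueCoverNum_le
        · intro c hc
          rcases Finset.mem_union.1 hc with hc | hc
          · obtain ⟨c0, hc0, rfl⟩ := Finset.mem_image.1 hc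
            intro a ha b hb hab
            simp only [Finset.coe_image, Set.mem_image, Finset.mem_coe] at ha hb
            obtain ⟨x, hx, rfl⟩ := ha
            obtain ⟨y, hy, rfl⟩ := hb
            exact hcl c0 hc0 hx hy (fun e => hab (congrArg _ e))
          · rw [Finset.mem_singleton.1 hc]; exact hT
        · intro v
          by_cases hvT : v ∈ T
          · exact ⟨T, Finset.mem_union_right _ (Finset.mem_singleton_self T), hvT⟩
          · obtain ⟨c, hc, hvc⟩ := hcov ⟨v, hvT⟩
            exact ⟨c.image Subtype.val,
              Finset.mem_union_left _ (Finset.mem_image.2 ⟨c, hc, rfl⟩),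
              Finset.mem_image.2 ⟨⟨v, hvT⟩, hvc, rfl⟩⟩
    _ ≤ (P.image (fun c => c.image Subtype.val)).card + 1 := by
        apply le_trans (Finset.card_union_le _ _); simp
    _ ≤ P.card + 1 := by gcongr; exact Finset.card_image_le

private lemma gap_del_le : gap (del G T) ≤ gap G + T.card := by
  have h1 := cliqueCoverNum_del_le G T
  have h2 := indepNum_le_del G T
  unfold gap
  omega

private lemma gap_le_del (hT : G.IsClique (T : Set V)) : gap G ≤ gap (del G T) + 1 := by
  have h1 := cliqueCoverNum_le_del G T hT
  have h2 := indepNum_del_le G T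
  unfold gap
  omega

end delAux

section transportAux
variable {V W : Type*} [Fintype V] [Fintype W] (G : SimpleGraph V)

private lemma indepNum_comap_le (e : W ≃ V) : _root_.indepNum (G.comap ⇑e) ≤ _root_.indepNum G := by
  classical
  obtain ⟨s, hs, hcard⟩ := exists_indep (G.comap ⇑e)
  rw [← hcard, ← Finset.card_image_of_injective s e.injective]
  apply le_indepNum
  intro a ha b hb hab
  simp only [Finset.coe_image, Set.mem_image, Finset.mem_coe] at ha hb
  obtain ⟨x, hx, rfl⟩ := ha
  obtain ⟨y, hy, rfl⟩ := hb
  exact hs hx hy (fun hxy => hab (congrArg _ hxy))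

private lemma cliqueCoverNum_comap_le (e : W ≃ V) :
    cliqueCoverNum (G.comap ⇑e) ≤ cliqueCoverNum G := by
  classical
  obtain ⟨P, hcl, hcov, hcard⟩ := exists_cover G
  rw [← hcard]
  calc cliqueCoverNum (G.comap ⇑e)
      ≤ (P.image (fun c => c.image ⇑e.symm)).card := by
        apply cliqueCoverNum_le
        · intro c hc
          obtain ⟨c0, hc0, rfl⟩ := Finset.mem_image.1 hc
          intro a ha b hb hab
          simp only [Finset.coe_image, Set.mem_image, Finset.mem_coe] at ha hb
          obtain ⟨x, hx, rfl⟩ := ha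
          obtain ⟨y, hy, rfl⟩ := hb
          have := hcl c0 hc0 hx hy (fun hxy => hab (congrArg _ hxy))
          simpa using this
        · intro w
          obtain ⟨c, hc, hwc⟩ := hcov (e w)
          refine ⟨c.image ⇑e.symm, Finset.mem_image.2 ⟨c, hc, rfl⟩, ?_⟩
          exact Finset.mem_image.2 ⟨e w, hwc, e.symm_apply_apply w⟩
    _ ≤ P.card := Finset.card_image_le

private lemma comap_comap_equiv (e : W ≃ V) : (G.comap ⇑e).comap ⇑e.symm = G := by
  ext a b; simp

private lemma gap_comap (e : W ≃ V) : gap (G.comap ⇑e) = gap G := by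
  have h1 := indepNum_comap_le G e
  have h2 := cliqueCoverNum_comap_le G e
  have h3 := indepNum_comap_le (G.comap ⇑e) e.symm
  have h4 := cliqueCoverNum_comap_le (G.comap ⇑e) e.symm
  rw [comap_comap_equiv G e] at h3 h4
  unfold gap
  omega

private lemma cliqueFree_comap (e : W ≃ V) {n : ℕ} (h : G.CliqueFree n) :
    (G.comap ⇑e).CliqueFree n :=
  h.comap ⟨⟨e, fun h => h⟩, e.injective⟩

end transportAux

private lemma mem_sSet {V : Type*} [Fintype V] (G : SimpleGraph V) (m : ℕ) (hm : gap G = m) :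
    Fintype.card V ∈ {n | ∃ G : SimpleGraph (Fin n), gap G = m} := by
  refine ⟨G.comap ⇑(Fintype.equivFin V).symm, ?_⟩
  rw [gap_comap G (Fintype.equivFin V).symm, hm]

private lemma mem_s2Set {V : Type*} [Fintype V] (G : SimpleGraph V) (m : ℕ)
    (hf : G.CliqueFree 3) (hm : gap G = m) :
    Fintype.card V ∈ {n | ∃ G : SimpleGraph (Fin n), G.CliqueFree 3 ∧ gap G = m} := by
  refine ⟨G.comap ⇑(Fintype.equivFin V).symm, cliqueFree_comap G _ hf, ?_⟩
  rw [gap_comap G (Fintype.equivFin V).symm, hm]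

private lemma sFun_le_card {V : Type*} [Fintype V] (G : SimpleGraph V) (m : ℕ)
    (hm : gap G = m) : sFun m ≤ Fintype.card V :=
  Nat.sInf_le (mem_sSet G m hm)

/-- Discrete continuity: every value up to the gap is realized by an induced subgraph. -/
private lemma sFun_le_of_le_gap :
    ∀ (n : ℕ) {V : Type*} [Fintype V] (G : SimpleGraph V),
      Fintype.card V = n → ∀ m, m ≤ gap G → sFun m ≤ n := by
  intro n
  induction n using Nat.strong_induction_on with
  | _ n IH =>
    intro V _ G hcard m hm
    rcases eq_or_lt_of_le hm with he | hlt
    · exact hcard ▸ sFun_le_card G m he.symm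
    · classical
      have hV : Nonempty V := by
        by_contra hV
        rw [not_nonempty_iff] at hV
        have := gap_eq_zero_of_card_zero G (Fintype.card_eq_zero_iff.2 hV)
        omega
      obtain ⟨v⟩ := hV
      have hn : 1 ≤ n := by
        rw [← hcard]
        exact Fintype.card_pos_iff.2 ⟨v⟩
      have hclique : G.IsClique (({v} : Finset V) : Set V) := by
        simp [SimpleGraph.IsClique]
      have hgd := gap_le_del G {v} hclique
      have hcd : Fintype.card {x : V // x ∉ ({v} : Finset V)} = n - 1 := by
        rw [card_del, hcard, Finset.card_singleton]
      have hm' : m ≤ gap (del G {v}) := by omega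
      have := IH (n - 1) (by omega) (del G {v}) hcd m hm'
      omega

theorem sFun_step_two (t : ℕ) (h : sFun (t + 1) = sFun t + 2) :
    (∀ (V : Type) [Fintype V] (G : SimpleGraph V),
      Fintype.card V = sFun (t + 1) → gap G = t + 1 → G.CliqueFree 3) ∧
    sFun t = s2Fun t ∧ sFun (t + 1) = s2Fun (t + 1) := by
  classical
  -- Part 1: every extremal graph is triangle-free
  have part1 : ∀ (V : Type) [Fintype V] (G : SimpleGraph V),
      Fintype.card V = sFun (t + 1) → gap G = t + 1 → G.CliqueFree 3 := by
    intro V _ G hcard hgap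
    by_contra hcf
    unfold SimpleGraph.CliqueFree at hcf
    push_neg at hcf
    obtain ⟨T, hT⟩ := hcf
    have hTclique : G.IsClique (T : Set V) := hT.1
    have hTcard : T.card = 3 := hT.2
    have h3 : 3 ≤ Fintype.card V := by
      rw [← hTcard, ← Finset.card_univ]
      exact Finset.card_le_univ T
    have hgd := gap_le_del G T hTclique
    have hcd : Fintype.card {x : V // x ∉ T} = Fintype.card V - 3 := by
      rw [card_del, hTcard]
    have hle : sFun t ≤ Fintype.card V - 3 :=
      sFun_le_of_le_gap (Fintype.card V - 3) (del G T) hcd t (by omega)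
    omega
  refine ⟨part1, ?_, ?_⟩
  -- the extremal graph exists
  · have hne : {n | ∃ G : SimpleGraph (Fin n), gap G = t + 1}.Nonempty := by
      by_contra hne
      rw [Set.not_nonempty_iff_eq_empty] at hne
      have : sFun (t + 1) = 0 := by
        unfold sFun
        rw [hne, Nat.sInf_empty]
      omega
    obtain ⟨G0, hG0⟩ : ∃ G0 : SimpleGraph (Fin (sFun (t + 1))), gap G0 = t + 1 :=
      Nat.sInf_mem hne
    have hG0card : Fintype.card (Fin (sFun (t + 1))) = sFun (t + 1) := Fintype.card_fin _
    have hG0free : G0.CliqueFree 3 := part1 _ G0 hG0card hG0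
    -- G0 has an edge
    have hedge : ∃ a b : Fin (sFun (t + 1)), G0.Adj a b := by
      by_contra hno
      push_neg at hno
      have := gap_eq_zero_of_no_edge G0 hno
      omega
    obtain ⟨a, b, hab⟩ := hedge
    have hne' : a ≠ b := G0.ne_of_adj hab
    set T : Finset (Fin (sFun (t + 1))) := {a, b} with hTdef
    have hTclique : G0.IsClique (T : Set (Fin (sFun (t + 1)))) := by
      intro x hx y hy hxy
      simp only [hTdef, Finset.coe_insert, Set.mem_insert_iff, Finset.coe_singleton,
        Set.mem_singleton_iff] at hx hy
      rcases hx with rfl | rfl <;> rcases hy with rfl | rfl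
      · exact absurd rfl hxy
      · exact hab
      · exact hab.symm
      · exact absurd rfl hxy
    have hTcard : T.card = 2 := Finset.card_pair hne'
    have hcd : Fintype.card {x : Fin (sFun (t + 1)) // x ∉ T} = sFun t := by
      rw [card_del, hTcard, hG0card]
      omega
    have hgd := gap_le_del G0 T hTclique
    -- the deleted graph has gap exactly t
    have hgapH : gap (del G0 T) = t := by
      by_contra hne2
      have hge : t + 1 ≤ gap (del G0 T) := by omega
      have := sFun_le_of_le_gap (sFun t) (del G0 T) hcd (t + 1) hge
      omega
    have hHfree : (del G0 T).CliqueFree 3 := del_cliqueFree G0 T hG0free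
    -- s2Fun t ≤ sFun t
    have hmem : sFun t ∈ {n | ∃ G : SimpleGraph (Fin n), G.CliqueFree 3 ∧ gap G = t} := by
      have := mem_s2Set (del G0 T) t hHfree hgapH
      rwa [hcd] at this
    have h21 : s2Fun t ≤ sFun t := Nat.sInf_le hmem
    -- sFun t ≤ s2Fun t
    obtain ⟨G1, hG1f, hG1⟩ :
        ∃ G1 : SimpleGraph (Fin (s2Fun t)), G1.CliqueFree 3 ∧ gap G1 = t :=
      Nat.sInf_mem ⟨sFun t, hmem⟩
    have h12 : sFun t ≤ s2Fun t := Nat.sInf_le ⟨G1, hG1⟩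
    omega
  · have hne : {n | ∃ G : SimpleGraph (Fin n), gap G = t + 1}.Nonempty := by
      by_contra hne
      rw [Set.not_nonempty_iff_eq_empty] at hne
      have : sFun (t + 1) = 0 := by
        unfold sFun
        rw [hne, Nat.sInf_empty]
      omega
    obtain ⟨G0, hG0⟩ : ∃ G0 : SimpleGraph (Fin (sFun (t + 1))), gap G0 = t + 1 :=
      Nat.sInf_mem hne
    have hG0card : Fintype.card (Fin (sFun (t + 1))) = sFun (t + 1) := Fintype.card_fin _
    have hG0free : G0.CliqueFree 3 := part1 _ G0 hG0card hG0
    have hmem : sFun (t + 1) ∈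
        {n | ∃ G : SimpleGraph (Fin n), G.CliqueFree 3 ∧ gap G = t + 1} := by
      have := mem_s2Set G0 (t + 1) hG0free hG0
      rwa [hG0card] at this
    have h21 : s2Fun (t + 1) ≤ sFun (t + 1) := Nat.sInf_le hmem
    obtain ⟨G1, hG1f, hG1⟩ :
        ∃ G1 : SimpleGraph (Fin (s2Fun (t + 1))), G1.CliqueFree 3 ∧ gap G1 = t + 1 :=
      Nat.sInf_mem ⟨sFun (t + 1), hmem⟩
    have h12 : sFun (t + 1) ≤ s2Fun (t + 1) := Nat.sInf_le ⟨G1, hG1⟩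
    omega
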